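/- For every 3-valued structure S that is an image of canonical abstraction (ICA) and every 2-valued structure S♮: S♮ ∈ γ_c(S) if and only if S♮ ⊨ γ̂_c(S), where γ̂_c(S) = F ∧ τ^S is the first-order characteristic formula for canonical abstraction of S. -/

import Mathlib

/-!
Common framework: 2-valued and 3-valued logical structures over a relational
vocabulary with a designated binary equality predicate, embedding, first-order
formulas with transitive closure and their Tarskian semantics, characteristic
formulas, canonical abstraction.
-/

namespace HeapAbs

/-- The three truth values 0, 1/2, 1. -/
inductive TV : Type
  | zero
  | half
  | one
  deriving DecidableEq

/-- Information order on truth values: `l1 ⊑ l2` iff `l1 = l2` or `l2 = 1/2`. -/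
def TV.le (a b : TV) : Prop := a = b ∨ b = TV.half

/-- `v` is the least upper bound (join) of the set `A` in the information order. -/
def TV.IsJoin (A : Set TV) (v : TV) : Prop :=
  (∀ a ∈ A, TV.le a v) ∧ ∀ w, (∀ a ∈ A, TV.le a w) → TV.le v w

/-- A (relational) vocabulary: a set of predicate symbols with arities and a
designated binary equality symbol. -/
structure Voc : Type 1 where
  rel : Type
  ar : rel → ℕ
  eqr : rel
  eq_ar : ar eqr = 2

/-- The pair `(u, v)` as a tuple (used for binary predicates). -/
def pair {α : Type _} {n : ℕ} (u v : α) : Fin n → α :=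
  fun i => if (i : ℕ) = 0 then u else v

/-- A 3-valued logical structure over the vocabulary `σ`. -/
structure Str3 (σ : Voc) : Type 1 where
  U : Type
  ι : (r : σ.rel) → (Fin (σ.ar r) → U) → TV
  eq_refl : ∀ u : U, ι σ.eqr (pair u u) ≠ TV.zero
  eq_ne : ∀ u v : U, u ≠ v → ι σ.eqr (pair u v) = TV.zero

/-- A 2-valued logical structure over `σ`: all predicate values are definite and
the equality symbol is interpreted as true equality. -/
structure Str2 (σ : Voc) : Type 1 where
  U : Type
  ι : (r : σ.rel) → (Fin (σ.ar r) → U) → Bool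
  eq_iff : ∀ u v : U, ι σ.eqr (pair u v) = true ↔ u = v

/-- The value of a predicate of a 2-valued structure, seen as a truth value. -/
def Str2.tv {σ : Voc} (C : Str2 σ) (r : σ.rel) (t : Fin (σ.ar r) → C.U) : TV :=
  if C.ι r t then TV.one else TV.zero

/-- `f` embeds the 2-valued structure `C` into the 3-valued structure `S`:
`f` is surjective and every predicate value of `C` is ⊑ the corresponding
value of `S`. -/
def Embeds {σ : Voc} (C : Str2 σ) (S : Str3 σ) (f : C.U → S.U) : Prop :=
  Function.Surjective f ∧
    ∀ (r : σ.rel) (t : Fin (σ.ar r) → C.U), TV.le (C.tv r t) (S.ι r (f ∘ t))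

/-- First-order formulas with transitive closure over vocabulary `σ`, with
free variables drawn from `V`. -/
inductive Fml (σ : Voc) : Type → Type 1 where
  | tru {V : Type} : Fml σ V
  | atom {V : Type} (r : σ.rel) (ts : Fin (σ.ar r) → V) : Fml σ V
  | not {V : Type} : Fml σ V → Fml σ V
  | or {V : Type} : Fml σ V → Fml σ V → Fml σ V
  | ex {V : Type} : Fml σ (Option V) → Fml σ V
  | tc {V : Type} (φ : Fml σ (Option (Option V))) (a b : V) : Fml σ V

/-- Tarskian satisfaction of a formula in a 2-valued structure under an
assignment `ρ` of the free variables. -/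
def Str2.Sat {σ : Voc} (C : Str2 σ) : {V : Type} → (V → C.U) → Fml σ V → Prop
  | _, _, .tru => True
  | _, ρ, .atom r ts => C.ι r (ρ ∘ ts) = true
  | _, ρ, .not φ => ¬ C.Sat ρ φ
  | _, ρ, .or φ ψ => C.Sat ρ φ ∨ C.Sat ρ ψ
  | _, ρ, .ex φ => ∃ m : C.U, C.Sat (fun v => Option.elim v m ρ) φ
  | _, ρ, .tc φ a b =>
      Relation.TransGen
        (fun x y => C.Sat (fun v => Option.elim v y (fun v' => Option.elim v' x ρ)) φ)
        (ρ a) (ρ b)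

/-- Satisfaction of a closed formula. -/
def SatC {σ : Voc} (C : Str2 σ) (φ : Fml σ Empty) : Prop :=
  C.Sat (fun x => x.elim) φ

namespace Fml

def fls {σ : Voc} {V : Type} : Fml σ V := .not .tru

def and {σ : Voc} {V : Type} (φ ψ : Fml σ V) : Fml σ V := .not (.or (.not φ) (.not ψ))

def imp {σ : Voc} {V : Type} (φ ψ : Fml σ V) : Fml σ V := .or (.not φ) ψ

def all {σ : Voc} {V : Type} (φ : Fml σ (Option V)) : Fml σ V := .not (.ex (.not φ))

def conj {σ : Voc} {V : Type} (l : List (Fml σ V)) : Fml σ V := l.foldr .and .tru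

def disj {σ : Voc} {V : Type} (l : List (Fml σ V)) : Fml σ V := l.foldr .or .fls

/-- Renaming of free variables. -/
def map {σ : Voc} : {V W : Type} → (V → W) → Fml σ V → Fml σ W
  | _, _, _, .tru => .tru
  | _, _, g, .atom r ts => .atom r (g ∘ ts)
  | _, _, g, .not φ => .not (φ.map g)
  | _, _, g, .or φ ψ => .or (φ.map g) (ψ.map g)
  | _, _, g, .ex φ => .ex (φ.map (Option.map g))
  | _, _, g, .tc φ a b => .tc (φ.map (Option.map (Option.map g))) (g a) (g b)

end Fml

/-- The characteristic formula `p^B` of the truth value `B` for the predicate `p`: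
`p^0 := ¬p`, `p^1 := p`, `p^{1/2} := true`. -/
def charFml {σ : Voc} {V : Type} (p : σ.rel) (ts : Fin (σ.ar p) → V) : TV → Fml σ V
  | TV.zero => .not (.atom p ts)
  | TV.one => .atom p ts
  | TV.half => .tru

/-- `node` is a family of node formulas (one per node of `S`, with a single free
variable `w`) witnessing that `S` is FO-identifiable: for every 2-valued `C`
embedding into `S` via `f` and every concrete node `uh`, `f uh = u` iff `C`
satisfies `node u` under `[w ↦ uh]`. -/
def IsNodeFamily {σ : Voc} (S : Str3 σ) (node : S.U → Fml σ Unit) : Prop :=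
  ∀ (C : Str2 σ) (f : C.U → S.U), Embeds C S f →
    ∀ (uh : C.U) (u : S.U), f uh = u ↔ C.Sat (fun _ => uh) (node u)

/-- `S` is FO-identifiable. -/
def FOIdentifiable {σ : Voc} (S : Str3 σ) : Prop :=
  ∃ node : S.U → Fml σ Unit, IsNodeFamily S node

/-- Mutual exclusivity of a family of node formulas: in every 2-valued structure
that embeds into `S`, every concrete node satisfies at most one node formula. -/
def MutExcl {σ : Voc} (S : Str3 σ) (node : S.U → Fml σ Unit) : Prop :=
  ∀ C : Str2 σ, (∃ f : C.U → S.U, Embeds C S f) →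
    ∀ (uh : C.U) (u1 u2 : S.U), u1 ≠ u2 →
      ¬ (C.Sat (fun _ => uh) (node u1) ∧ C.Sat (fun _ => uh) (node u2))

/-- `S` is a bounded structure: any two distinct nodes are distinguished by a
unary predicate having distinct definite values on them. -/
def Bounded {σ : Voc} (S : Str3 σ) : Prop :=
  ∀ u1 u2 : S.U, u1 ≠ u2 →
    ∃ p : σ.rel, σ.ar p = 1 ∧
      S.ι p (fun _ => u1) ≠ S.ι p (fun _ => u2) ∧
      S.ι p (fun _ => u1) ≠ TV.half ∧ S.ι p (fun _ => u2) ≠ TV.half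

/-- The node formula `node^S_u(w) := ⋀_{p unary} p^{ι^S(p)(u)}(w)`. -/
noncomputable def boundedNode {σ : Voc} [Fintype σ.rel] (S : Str3 σ) (u : S.U) : Fml σ Unit :=
  Fml.conj
    (((Finset.univ : Finset {p : σ.rel // σ.ar p = 1}).toList).map
      (fun p => charFml p.1 (fun _ => ()) (S.ι p.1 (fun _ => u))))

/-- The conjunction `⋀_j node_{t j}(w_j)` over the components of a tuple of
abstract nodes, as a formula with free variables `w_1, …, w_n`. -/
def nodeTuple {σ : Voc} (S : Str3 σ) (node : S.U → Fml σ Unit) {n : ℕ}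
    (t : Fin n → S.U) : Fml σ (Fin n) :=
  Fml.conj (List.ofFn fun j : Fin n => (node (t j)).map (fun _ => j))

/-- Universal closure of a formula with `n` free variables. -/
def closeAll {σ : Voc} : {n : ℕ} → Fml σ (Fin n) → Fml σ Empty
  | 0, φ => φ.map Fin.elim0
  | _ + 1, φ =>
      closeAll (Fml.all (φ.map (fun i => Fin.lastCases none (fun j => some j) i)))

/-- Existential closure of a formula with `n` free variables. -/
def closeEx {σ : Voc} : {n : ℕ} → Fml σ (Fin n) → Fml σ Empty
  | 0, φ => φ.map Fin.elim0
  | _ + 1, φ =>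
      closeEx (Fml.ex (φ.map (fun i => Fin.lastCases none (fun j => some j) i)))

/-- `∃ v : node_u(v)`. -/
noncomputable def existsNode {σ : Voc} (S : Str3 σ) (node : S.U → Fml σ Unit) (u : S.U) :
    Fml σ Empty :=
  .ex ((node u).map (fun _ => (none : Option Empty)))

/-- The totality formula `∀ w : ⋁_i node_{u_i}(w)`. -/
noncomputable def xiTotal {σ : Voc} (S : Str3 σ) [Fintype S.U] (node : S.U → Fml σ Unit) :
    Fml σ Empty :=
  Fml.all (Fml.disj
    (((Finset.univ : Finset S.U).toList).map
      (fun u => (node u).map (fun _ => (none : Option Empty)))))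

/-- The nullary characteristic formula `⋀_{p nullary} p^{ι^S(p)()}`. -/
noncomputable def xiNullary {σ : Voc} [Fintype σ.rel] (S : Str3 σ) : Fml σ Empty :=
  Fml.conj
    (((Finset.univ : Finset σ.rel).toList).map (fun p =>
      if h : σ.ar p = 0 then
        charFml p (fun i => Fin.elim0 (Fin.cast h i))
          (S.ι p (fun i => Fin.elim0 (Fin.cast h i)))
      else .tru))

/-- The predicate characteristic formula
`∀ w1 … wr : ⋀_{tuples ū} ((⋀_j node_{ū j}(w_j)) → p^{ι^S(p)(ū)}(w̄))`. -/
noncomputable def xiPred {σ : Voc} (S : Str3 σ) [Fintype S.U] (node : S.U → Fml σ Unit)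
    (p : σ.rel) : Fml σ Empty :=
  closeAll (Fml.conj
    (((Finset.univ : Finset (Fin (σ.ar p) → S.U)).toList).map
      (fun t => Fml.imp (nodeTuple S node t)
        (charFml p (fun j => j) (S.ι p t)))))

/-- Conjunction of the predicate characteristic formulas over all predicates of
arity ≥ 1. -/
noncomputable def xiPredAll {σ : Voc} [Fintype σ.rel] (S : Str3 σ) [Fintype S.U]
    (node : S.U → Fml σ Unit) : Fml σ Empty :=
  Fml.conj
    (((Finset.univ : Finset σ.rel).toList).map (fun p =>
      if σ.ar p = 0 then .tru else xiPred S node p))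

/-- The first-order characteristic formula `ξ^S` of `S` (w.r.t. the node
formulas `node`). -/
noncomputable def xi {σ : Voc} [Fintype σ.rel] (S : Str3 σ) [Fintype S.U]
    (node : S.U → Fml σ Unit) : Fml σ Empty :=
  (Fml.conj (((Finset.univ : Finset S.U).toList).map (existsNode S node))).and
    ((xiTotal S node).and ((xiNullary S).and (xiPredAll S node)))

/-- The concretization `γ(S)`: the 2-valued structures that embed into `S` and
satisfy the integrity formula `F`. -/
def gammaSet {σ : Voc} (F : Fml σ Empty) (S : Str3 σ) : Set (Str2 σ) :=
  {C | (∃ f : C.U → S.U, Embeds C S f) ∧ SatC C F}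

/-- `S` is the canonical abstraction of the 2-valued structure `C` via `blur`:
`blur` is a surjective embedding that identifies exactly the concrete nodes with
equal canonical names (the values of the unary predicates), and every abstract
predicate value is the join of the concrete values it represents. -/
def IsCanonAbs {σ : Voc} (C : Str2 σ) (S : Str3 σ) (blur : C.U → S.U) : Prop :=
  Embeds C S blur ∧
    (∀ u v : C.U, blur u = blur v ↔
      ∀ p : σ.rel, σ.ar p = 1 → C.ι p (fun _ => u) = C.ι p (fun _ => v)) ∧
    ∀ (p : σ.rel) (t' : Fin (σ.ar p) → S.U),
      TV.IsJoin {b | ∃ t : Fin (σ.ar p) → C.U, blur ∘ t = t' ∧ C.tv p t = b}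
        (S.ι p t')

/-- `S` is an image of canonical abstraction. -/
def ICA {σ : Voc} (S : Str3 σ) : Prop :=
  ∃ (C : Str2 σ) (blur : C.U → S.U), IsCanonAbs C S blur

/-- The concretization of `S` under canonical abstraction. -/
def gammaC {σ : Voc} (F : Fml σ Empty) (S : Str3 σ) : Set (Str2 σ) :=
  {C | (∃ blur : C.U → S.U, IsCanonAbs C S blur) ∧ SatC C F}

/-- `node` is a family of node formulas witnessing canonical-FO-identifiability
of `S`. -/
def IsCanonNodeFamily {σ : Voc} (S : Str3 σ) (node : S.U → Fml σ Unit) : Prop :=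
  ∀ (C : Str2 σ) (blur : C.U → S.U), IsCanonAbs C S blur →
    ∀ (uh : C.U) (u : S.U), blur uh = u ↔ C.Sat (fun _ => uh) (node u)

/-- `τ^S[p]`: for every tuple where `p` has value 1/2, there are concrete
tuples (satisfying the node formulas) on which `p` holds, resp., fails. -/
noncomputable def tauPred {σ : Voc} (S : Str3 σ) [Fintype S.U] (node : S.U → Fml σ Unit)
    (p : σ.rel) : Fml σ Empty :=
  Fml.conj
    (((((Finset.univ : Finset (Fin (σ.ar p) → S.U)).toList).filter
        (fun t => decide (S.ι p t = TV.half))).map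
      (fun t =>
        (closeEx ((nodeTuple S node t).and (.atom p (fun j => j)))).and
          (closeEx ((nodeTuple S node t).and (.not (.atom p (fun j => j))))))))

/-- `τ^S := ξ^S ∧ ⋀_{p of arity ≥ 2} τ^S[p]`. -/
noncomputable def tau {σ : Voc} [Fintype σ.rel] (S : Str3 σ) [Fintype S.U]
    (node : S.U → Fml σ Unit) : Fml σ Empty :=
  (xi S node).and
    (Fml.conj (((Finset.univ : Finset σ.rel).toList).map (fun p =>
      if 2 ≤ σ.ar p then tauPred S node p else .tru)))

/-- Isomorphism of 3-valued structures. -/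
def Iso3 {σ : Voc} (S1 S2 : Str3 σ) : Prop :=
  ∃ e : S1.U ≃ S2.U,
    ∀ (p : σ.rel) (t : Fin (σ.ar p) → S1.U), S1.ι p t = S2.ι p (e ∘ t)

/-- Satisfaction of the NP (existential monadic second-order) characteristic
formula `ψ^S` of `S` in the 2-valued structure `C`: there exist sets `V_u`
(one per node `u` of `S`) that are nonempty, pairwise disjoint, and cover `C`,
such that the nullary and the predicate characteristic conjuncts hold with
`node_{u}(w) := w ∈ V_u`. -/
def SatNP {σ : Voc} (S : Str3 σ) (C : Str2 σ) : Prop :=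
  ∃ V : S.U → Set C.U,
    (∀ u : S.U, ∃ w, w ∈ V u) ∧
    (∀ u1 u2 : S.U, u1 ≠ u2 →
      ∀ w1 ∈ V u1, ∀ w2 ∈ V u2, ¬ C.ι σ.eqr (pair w1 w2) = true) ∧
    (∀ w : C.U, ∃ u : S.U, w ∈ V u) ∧
    (∀ (p : σ.rel) (h : σ.ar p = 0),
      TV.le (C.tv p (fun i => Fin.elim0 (Fin.cast h i)))
        (S.ι p (fun i => Fin.elim0 (Fin.cast h i)))) ∧
    (∀ (p : σ.rel), 1 ≤ σ.ar p →
      ∀ (t : Fin (σ.ar p) → C.U) (us : Fin (σ.ar p) → S.U),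
        (∀ j, t j ∈ V (us j)) → TV.le (C.tv p t) (S.ι p us))


/-! ### Auxiliary lemmas -/

section Aux

variable {σ : Voc}

lemma TV.le_rfl (a : TV) : TV.le a a := Or.inl rfl

lemma TV.le_half' (a : TV) : TV.le a TV.half := Or.inr rfl

lemma TV.eq_of_le_of_ne_half {a b : TV} (h : TV.le a b) (hb : b ≠ TV.half) : a = b :=
  h.resolve_right hb

lemma Str2.tv_ne_half (C : Str2 σ) (r : σ.rel) (t : Fin (σ.ar r) → C.U) :
    C.tv r t ≠ TV.half := by
  unfold Str2.tv; split <;> simp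

lemma Str2.tv_inj (C : Str2 σ) (r : σ.rel) (t t' : Fin (σ.ar r) → C.U)
    (h : C.tv r t = C.tv r t') : C.ι r t = C.ι r t' := by
  unfold Str2.tv at h
  rcases hb : C.ι r t <;> rcases hb' : C.ι r t' <;> simp [hb, hb'] at h ⊢

lemma Str2.tv_eq_one_iff (C : Str2 σ) (r : σ.rel) (t : Fin (σ.ar r) → C.U) :
    C.tv r t = TV.one ↔ C.ι r t = true := by
  unfold Str2.tv; split <;> simp_all

lemma Str2.tv_eq_zero_iff (C : Str2 σ) (r : σ.rel) (t : Fin (σ.ar r) → C.U) :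
    C.tv r t = TV.zero ↔ C.ι r t = false := by
  unfold Str2.tv; split <;> simp_all

/-- Join facts. -/
lemma isJoin_singleton {A : Set TV} {b : TV} (hne : A.Nonempty) (hsub : ∀ a ∈ A, a = b) :
    TV.IsJoin A b := by
  refine ⟨fun a ha => (hsub a ha) ▸ TV.le_rfl b, fun w hw => ?_⟩
  obtain ⟨a, ha⟩ := hne
  exact (hsub a ha) ▸ hw a ha

lemma IsJoin.eq_of_subsingleton {A : Set TV} {v b : TV} (hJ : TV.IsJoin A v)
    (hne : A.Nonempty) (hsub : ∀ a ∈ A, a = b) (hb : b ≠ TV.half) : v = b := by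
  obtain ⟨a, ha⟩ := hne
  have h1 : TV.le b v := (hsub a ha) ▸ hJ.1 a ha
  have h2 : TV.le v b := hJ.2 b (fun a' ha' => (hsub a' ha') ▸ TV.le_rfl b)
  rcases h2 with h2 | h2
  · exact h2
  · exact absurd h2 hb

lemma IsJoin.mem_of_half {A : Set TV} (hJ : TV.IsJoin A TV.half)
    (hnh : ∀ a ∈ A, a ≠ TV.half) : TV.one ∈ A ∧ TV.zero ∈ A := by
  constructor
  · by_contra hone
    have : TV.le TV.half TV.zero := by
      apply hJ.2
      intro a ha
      rcases a with _ | _ | _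
      · exact TV.le_rfl _
      · exact absurd rfl (hnh _ ha)
      · exact absurd ha hone
    simp [TV.le] at this
  · by_contra hzero
    have : TV.le TV.half TV.one := by
      apply hJ.2
      intro a ha
      rcases a with _ | _ | _
      · exact absurd ha hzero
      · exact absurd rfl (hnh _ ha)
      · exact TV.le_rfl _
    simp [TV.le] at this

/-! #### Semantics of derived connectives -/

variable (C : Str2 σ)

lemma sat_not {V : Type} (ρ : V → C.U) (φ : Fml σ V) :
    C.Sat ρ (.not φ) ↔ ¬ C.Sat ρ φ := Iff.rfl

lemma sat_or {V : Type} (ρ : V → C.U) (φ ψ : Fml σ V) :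
    C.Sat ρ (.or φ ψ) ↔ C.Sat ρ φ ∨ C.Sat ρ ψ := Iff.rfl

lemma sat_and {V : Type} (ρ : V → C.U) (φ ψ : Fml σ V) :
    C.Sat ρ (φ.and ψ) ↔ C.Sat ρ φ ∧ C.Sat ρ ψ := by
  simp only [Fml.and, sat_not, sat_or]; tauto

lemma sat_imp {V : Type} (ρ : V → C.U) (φ ψ : Fml σ V) :
    C.Sat ρ (φ.imp ψ) ↔ (C.Sat ρ φ → C.Sat ρ ψ) := by
  simp only [Fml.imp, sat_not, sat_or]; tauto

lemma sat_tru {V : Type} (ρ : V → C.U) : C.Sat ρ (.tru : Fml σ V) := trivial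

lemma sat_fls {V : Type} (ρ : V → C.U) : ¬ C.Sat ρ (Fml.fls : Fml σ V) :=
  fun h => h trivial

lemma sat_ex {V : Type} (ρ : V → C.U) (φ : Fml σ (Option V)) :
    C.Sat ρ (.ex φ) ↔ ∃ m : C.U, C.Sat (fun v => Option.elim v m ρ) φ := Iff.rfl

lemma sat_all {V : Type} (ρ : V → C.U) (φ : Fml σ (Option V)) :
    C.Sat ρ (Fml.all φ) ↔ ∀ m : C.U, C.Sat (fun v => Option.elim v m ρ) φ := by
  simp only [Fml.all, sat_not, sat_ex]
  push_neg
  simp only [not_not]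

lemma sat_conj {V : Type} (ρ : V → C.U) (l : List (Fml σ V)) :
    C.Sat ρ (Fml.conj l) ↔ ∀ φ ∈ l, C.Sat ρ φ := by
  induction l with
  | nil => simp [Fml.conj, sat_tru]
  | cons a l ih =>
      rw [show Fml.conj (a :: l) = a.and (Fml.conj l) from rfl, sat_and, ih]
      simp

lemma sat_disj {V : Type} (ρ : V → C.U) (l : List (Fml σ V)) :
    C.Sat ρ (Fml.disj l) ↔ ∃ φ ∈ l, C.Sat ρ φ := by
  induction l with
  | nil => simpa [Fml.disj] using sat_fls C ρ
  | cons a l ih =>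
      rw [show (Fml.disj (a :: l)) = .or a (Fml.disj l) from rfl, sat_or, ih]
      simp

lemma sat_map : ∀ {V W : Type} (φ : Fml σ V) (g : V → W) (ρ : W → C.U),
    C.Sat ρ (φ.map g) ↔ C.Sat (ρ ∘ g) φ
  | _, _, .tru, _, _ => Iff.rfl
  | _, _, .atom r ts, g, ρ => by
      simp only [Fml.map, Str2.Sat]
      rw [show ρ ∘ (g ∘ ts) = (ρ ∘ g) ∘ ts from rfl]
  | _, _, .not φ, g, ρ => by
      simp only [Fml.map, sat_not, sat_map φ g ρ]
  | _, _, .or φ ψ, g, ρ => by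
      simp only [Fml.map, sat_or, sat_map φ g ρ, sat_map ψ g ρ]
  | _, _, .ex φ, g, ρ => by
      simp only [Fml.map, sat_ex]
      refine exists_congr fun m => ?_
      rw [sat_map φ (Option.map g) _]
      have : ((fun v => Option.elim v m ρ) ∘ Option.map g)
          = fun v => Option.elim v m (ρ ∘ g) := by
        funext v; cases v <;> rfl
      rw [this]
  | _, _, .tc φ a b, g, ρ => by
      simp only [Fml.map, Str2.Sat]
      constructor <;> refine fun h => Relation.TransGen.mono (fun x y hxy => ?_) _ _ h
      · rw [sat_map φ (Option.map (Option.map g)) _] at hxy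
        have : ((fun v => Option.elim v y fun v' => Option.elim v' x ρ)
            ∘ Option.map (Option.map g))
            = fun v => Option.elim v y fun v' => Option.elim v' x (ρ ∘ g) := by
          funext v; cases v with
          | none => rfl
          | some v' => cases v' <;> rfl
        rwa [this] at hxy
      · rw [sat_map φ (Option.map (Option.map g)) _]
        have : ((fun v => Option.elim v y fun v' => Option.elim v' x ρ)
            ∘ Option.map (Option.map g))
            = fun v => Option.elim v y fun v' => Option.elim v' x (ρ ∘ g) := by
          funext v; cases v with
          | none => rfl
          | some v' => cases v' <;> rfl
        rwa [this]

lemma snoc_eq_elim {α : Type _} {n : ℕ} (ρ : Fin n → α) (m : α) :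
    ((fun v : Option (Fin n) => Option.elim v m ρ) ∘
        fun i : Fin (n + 1) =>
          Fin.lastCases (motive := fun _ => Option (Fin n)) none (fun j => some j) i)
      = Fin.snoc ρ m := by
  funext i
  refine Fin.lastCases ?_ (fun j => ?_) i
  · simp [Function.comp]
  · simp [Function.comp]

lemma sat_closeAll : ∀ {n : ℕ} (φ : Fml σ (Fin n)),
    SatC C (closeAll φ) ↔ ∀ ρ : Fin n → C.U, C.Sat ρ φ
  | 0, φ => by
      simp only [closeAll, SatC, sat_map]
      constructor
      · intro h ρ
        have : ρ = (fun x : Empty => x.elim) ∘ Fin.elim0 := by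
          funext i; exact i.elim0
        rw [this]; exact h
      · intro h; exact h _
  | n + 1, φ => by
      rw [closeAll, sat_closeAll]
      constructor
      · intro h ρ
        have h2 := h (Fin.init ρ)
        rw [sat_all] at h2
        have h3 := h2 (ρ (Fin.last n))
        rw [sat_map, snoc_eq_elim, Fin.snoc_init_self] at h3
        exact h3
      · intro h ρ
        rw [sat_all]
        intro m
        rw [sat_map, snoc_eq_elim]
        exact h _

lemma sat_closeEx : ∀ {n : ℕ} (φ : Fml σ (Fin n)),
    SatC C (closeEx φ) ↔ ∃ ρ : Fin n → C.U, C.Sat ρ φ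
  | 0, φ => by
      simp only [closeEx, SatC, sat_map]
      constructor
      · intro h; exact ⟨_, h⟩
      · rintro ⟨ρ, h⟩
        have : ρ = (fun x : Empty => x.elim) ∘ Fin.elim0 := by
          funext i; exact i.elim0
        rwa [this] at h
  | n + 1, φ => by
      rw [closeEx, sat_closeEx]
      constructor
      · rintro ⟨ρ, h⟩
        rw [sat_ex] at h
        obtain ⟨m, h⟩ := h
        rw [sat_map, snoc_eq_elim] at h
        exact ⟨_, h⟩
      · rintro ⟨ρ, h⟩
        refine ⟨Fin.init ρ, ?_⟩
        rw [sat_ex]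
        refine ⟨ρ (Fin.last n), ?_⟩
        rw [sat_map, snoc_eq_elim, Fin.snoc_init_self]
        exact h

lemma sat_charFml {V : Type} (p : σ.rel) (ts : Fin (σ.ar p) → V) (B : TV) (ρ : V → C.U) :
    C.Sat ρ (charFml p ts B) ↔ TV.le (C.tv p (ρ ∘ ts)) B := by
  rcases B with _ | _ | _
  · rw [show charFml p ts TV.zero = .not (.atom p ts) from rfl, sat_not]
    rw [show C.Sat ρ (.atom p ts) ↔ C.ι p (ρ ∘ ts) = true from Iff.rfl]
    unfold Str2.tv TV.le
    rcases h : C.ι p (ρ ∘ ts) <;> simp [h]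
  · rw [show charFml p ts TV.half = .tru from rfl]
    simp [sat_tru, TV.le]
  · rw [show charFml p ts TV.one = .atom p ts from rfl]
    rw [show C.Sat ρ (.atom p ts) ↔ C.ι p (ρ ∘ ts) = true from Iff.rfl]
    unfold Str2.tv TV.le
    rcases h : C.ι p (ρ ∘ ts) <;> simp [h]

lemma sat_boundedNode [Fintype σ.rel] (S : Str3 σ) (u : S.U) (uh : C.U) :
    C.Sat (fun _ => uh) (boundedNode S u) ↔
      ∀ p : σ.rel, σ.ar p = 1 →
        TV.le (C.tv p (fun _ => uh)) (S.ι p (fun _ => u)) := by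
  rw [boundedNode, sat_conj]
  constructor
  · intro h p hp
    have hmem : (⟨p, hp⟩ : {p : σ.rel // σ.ar p = 1}) ∈
        (Finset.univ : Finset {p : σ.rel // σ.ar p = 1}).toList :=
      Finset.mem_toList.mpr (Finset.mem_univ _)
    have := h _ (List.mem_map.mpr ⟨⟨p, hp⟩, hmem, rfl⟩)
    rwa [sat_charFml] at this
  · intro h φ hφ
    obtain ⟨⟨p, hp⟩, _, rfl⟩ := List.mem_map.mp hφ
    rw [sat_charFml]
    exact h p hp

lemma sat_nodeTuple (S : Str3 σ) (node : S.U → Fml σ Unit) {n : ℕ}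
    (t : Fin n → S.U) (ρ : Fin n → C.U) :
    C.Sat ρ (nodeTuple S node t) ↔ ∀ j : Fin n, C.Sat (fun _ => ρ j) (node (t j)) := by
  rw [nodeTuple, sat_conj]
  constructor
  · intro h j
    have := h _ (List.mem_ofFn.mpr ⟨j, rfl⟩)
    rwa [sat_map] at this
  · intro h φ hφ
    obtain ⟨j, rfl⟩ := List.mem_ofFn.mp hφ
    rw [sat_map]
    exact h j

end Aux

section Canon

variable {σ : Voc}

lemma exists_preimage_tuple {α β : Type _} {f : α → β} (hf : Function.Surjective f)
    {n : ℕ} (t' : Fin n → β) : ∃ t : Fin n → α, f ∘ t = t' := by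
  choose g hg using hf
  exact ⟨g ∘ t', by funext i; exact hg (t' i)⟩

lemma Str2.tv_ne_of_ι_ne (C : Str2 σ) (r : σ.rel) {t t' : Fin (σ.ar r) → C.U}
    (h : C.ι r t ≠ C.ι r t') : C.tv r t ≠ C.tv r t' :=
  fun heq => h (C.tv_inj r t t' heq)

lemma isCanonAbs_tv_eq_of_low {C0 : Str2 σ} {S : Str3 σ} {blur : C0.U → S.U}
    (h : IsCanonAbs C0 S blur) (p : σ.rel) (hp : σ.ar p ≤ 1)
    (t1 t2 : Fin (σ.ar p) → C0.U) (ht : blur ∘ t1 = blur ∘ t2) :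
    C0.tv p t1 = C0.tv p t2 := by
  rcases Nat.lt_or_ge (σ.ar p) 1 with h0 | h1
  · have : t1 = t2 := funext fun i => absurd i.isLt (by omega)
    rw [this]
  · have h1 : σ.ar p = 1 := le_antisymm hp h1
    have hpos : 0 < σ.ar p := by omega
    set i0 : Fin (σ.ar p) := ⟨0, hpos⟩ with hi0def
    have hi0 : ∀ i : Fin (σ.ar p), i = i0 := fun i => Fin.ext (by omega)
    have ht1 : t1 = fun _ => t1 i0 := funext fun i => by rw [hi0 i]
    have ht2 : t2 = fun _ => t2 i0 := funext fun i => by rw [hi0 i]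
    have hblur : blur (t1 i0) = blur (t2 i0) := congrFun ht i0
    have hunary := (h.2.1 (t1 i0) (t2 i0)).mp hblur p h1
    unfold Str2.tv
    rw [ht1, ht2, hunary]

lemma isCanonAbs_low_definite {C0 : Str2 σ} {S : Str3 σ} {blur : C0.U → S.U}
    (h : IsCanonAbs C0 S blur) (p : σ.rel) (hp : σ.ar p ≤ 1)
    (t' : Fin (σ.ar p) → S.U) :
    S.ι p t' ≠ TV.half ∧
      ∀ t : Fin (σ.ar p) → C0.U, blur ∘ t = t' → C0.tv p t = S.ι p t' := by
  obtain ⟨t0, ht0⟩ := exists_preimage_tuple h.1.1 t'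
  have hJ := h.2.2 p t'
  have hsub : ∀ a ∈ {b | ∃ t : Fin (σ.ar p) → C0.U, blur ∘ t = t' ∧ C0.tv p t = b},
      a = C0.tv p t0 := by
    rintro a ⟨t, ht, rfl⟩
    exact isCanonAbs_tv_eq_of_low h p hp t t0 (ht.trans ht0.symm)
  have hv : S.ι p t' = C0.tv p t0 :=
    IsJoin.eq_of_subsingleton hJ ⟨C0.tv p t0, t0, ht0, rfl⟩ hsub (C0.tv_ne_half p t0)
  refine ⟨hv ▸ C0.tv_ne_half p t0, fun t ht => ?_⟩
  rw [hv]
  exact isCanonAbs_tv_eq_of_low h p hp t t0 (ht.trans ht0.symm)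

variable [Fintype σ.rel]

lemma isCanonAbs_node_iff {C : Str2 σ} {S : Str3 σ} {blur : C.U → S.U}
    (h : IsCanonAbs C S blur) (uh : C.U) (u : S.U) :
    blur uh = u ↔ C.Sat (fun _ => uh) (boundedNode S u) := by
  rw [sat_boundedNode]
  constructor
  · intro hu p hp
    have := h.1.2 p (fun _ => uh)
    have hcomp : (blur ∘ fun _ : Fin (σ.ar p) => uh) = fun _ => u := by
      funext i; simp [Function.comp, hu]
    rwa [hcomp] at this
  · intro hnode
    -- for every unary p, S.ι p (fun _ => u) is definite and equals C.tv p (fun _ => uh)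
    have hval : ∀ p : σ.rel, σ.ar p = 1 →
        C.tv p (fun _ => uh) = S.ι p (fun _ => u) := by
      intro p hp
      have hdef := (isCanonAbs_low_definite h p (by omega) (fun _ => u)).1
      exact TV.eq_of_le_of_ne_half (hnode p hp) hdef
    obtain ⟨uh2, huh2⟩ := h.1.1 u
    have hval2 : ∀ p : σ.rel, σ.ar p = 1 →
        C.tv p (fun _ => uh2) = S.ι p (fun _ => u) := by
      intro p hp
      refine (isCanonAbs_low_definite h p (by omega) (fun _ => u)).2 _ ?_
      funext i; simp [Function.comp, huh2]
    have : blur uh2 = blur uh := by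
      refine (h.2.1 uh2 uh).mpr fun p hp => ?_
      exact C.tv_inj p _ _ ((hval2 p hp).trans (hval p hp).symm)
    rw [← huh2, this]

omit [Fintype σ.rel] in
/-- From an ICA structure: distinct abstract nodes are separated by a unary
predicate with distinct definite values. -/
lemma ica_separating {S : Str3 σ} (hICA : ICA S) :
    ∀ u1 u2 : S.U, u1 ≠ u2 → ∃ p : σ.rel, σ.ar p = 1 ∧
      S.ι p (fun _ => u1) ≠ S.ι p (fun _ => u2) ∧
      S.ι p (fun _ => u1) ≠ TV.half ∧ S.ι p (fun _ => u2) ≠ TV.half := by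
  obtain ⟨C0, blur0, h⟩ := hICA
  intro u1 u2 hne
  obtain ⟨uh1, huh1⟩ := h.1.1 u1
  obtain ⟨uh2, huh2⟩ := h.1.1 u2
  have hblurne : blur0 uh1 ≠ blur0 uh2 := by rw [huh1, huh2]; exact hne
  have : ¬ ∀ p : σ.rel, σ.ar p = 1 →
      C0.ι p (fun _ => uh1) = C0.ι p (fun _ => uh2) := fun hall =>
    hblurne ((h.2.1 uh1 uh2).mpr hall)
  push_neg at this
  obtain ⟨p, hp, hιne⟩ := this
  have hv1 : C0.tv p (fun _ => uh1) = S.ι p (fun _ => u1) := by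
    refine (isCanonAbs_low_definite h p (by omega) (fun _ => u1)).2 _ ?_
    funext i; simp [Function.comp, huh1]
  have hv2 : C0.tv p (fun _ => uh2) = S.ι p (fun _ => u2) := by
    refine (isCanonAbs_low_definite h p (by omega) (fun _ => u2)).2 _ ?_
    funext i; simp [Function.comp, huh2]
  refine ⟨p, hp, ?_, hv1 ▸ C0.tv_ne_half p _, hv2 ▸ C0.tv_ne_half p _⟩
  rw [← hv1, ← hv2]
  exact C0.tv_ne_of_ι_ne p hιne

/-- Uniqueness of the node formula satisfied by a concrete node. -/
lemma node_unique {S : Str3 σ} (hICA : ICA S) (C : Str2 σ) (uh : C.U)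
    (u1 u2 : S.U) (h1 : C.Sat (fun _ => uh) (boundedNode S u1))
    (h2 : C.Sat (fun _ => uh) (boundedNode S u2)) : u1 = u2 := by
  by_contra hne
  obtain ⟨p, hp, hvne, hd1, hd2⟩ := ica_separating hICA u1 u2 hne
  rw [sat_boundedNode] at h1 h2
  have e1 : C.tv p (fun _ => uh) = S.ι p (fun _ => u1) :=
    TV.eq_of_le_of_ne_half (h1 p hp) hd1
  have e2 : C.tv p (fun _ => uh) = S.ι p (fun _ => u2) :=
    TV.eq_of_le_of_ne_half (h2 p hp) hd2
  exact hvne (e1 ▸ e2)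

end Canon

section Main

variable {σ : Voc} [Fintype σ.rel]

lemma sat_xi_of {C : Str2 σ} {S : Str3 σ} [Fintype S.U] (blur : C.U → S.U)
    (hsurj : Function.Surjective blur)
    (hemb : ∀ (r : σ.rel) (t : Fin (σ.ar r) → C.U), TV.le (C.tv r t) (S.ι r (blur ∘ t)))
    (hnode : ∀ (uh : C.U) (u : S.U),
      blur uh = u ↔ C.Sat (fun _ => uh) (boundedNode S u)) :
    SatC C (xi S (boundedNode S)) := by
  unfold SatC
  rw [xi, sat_and, sat_and, sat_and]
  refine ⟨?_, ?_, ?_, ?_⟩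
  · -- existsNode conjuncts
    rw [sat_conj]
    intro φ hφ
    obtain ⟨u, -, rfl⟩ := List.mem_map.mp hφ
    rw [existsNode, sat_ex]
    obtain ⟨uh, huh⟩ := hsurj u
    refine ⟨uh, ?_⟩
    rw [sat_map]
    exact (hnode uh u).mp huh
  · -- totality
    rw [xiTotal, sat_all]
    intro m
    rw [sat_disj]
    refine ⟨_, List.mem_map.mpr
      ⟨blur m, Finset.mem_toList.mpr (Finset.mem_univ _), rfl⟩, ?_⟩
    rw [sat_map]
    exact (hnode m (blur m)).mp rfl
  · -- nullary
    rw [xiNullary, sat_conj]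
    intro φ hφ
    obtain ⟨p, -, rfl⟩ := List.mem_map.mp hφ
    by_cases h0 : σ.ar p = 0
    · rw [dif_pos h0, sat_charFml]
      have h1 := hemb p ((fun x : Empty => x.elim) ∘ fun i => Fin.elim0 (Fin.cast h0 i))
      have he : (blur ∘ ((fun x : Empty => x.elim) ∘ fun i => Fin.elim0 (Fin.cast h0 i)))
          = fun i => Fin.elim0 (Fin.cast h0 i) := by
        funext i; exact (Fin.cast h0 i).elim0
      rwa [he] at h1
    · rw [dif_neg h0]; exact sat_tru C _
  · -- predicate conjuncts
    rw [xiPredAll, sat_conj]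
    intro φ hφ
    obtain ⟨p, -, rfl⟩ := List.mem_map.mp hφ
    by_cases h0 : σ.ar p = 0
    · rw [if_pos h0]; exact sat_tru C _
    · rw [if_neg h0, xiPred]
      refine (sat_closeAll C _).mpr fun ρ => ?_
      rw [sat_conj]
      intro ψ hψ
      obtain ⟨tup, -, rfl⟩ := List.mem_map.mp hψ
      rw [sat_imp, sat_nodeTuple]
      intro hnt
      have hbl : blur ∘ ρ = tup := funext fun j => (hnode (ρ j) (tup j)).mpr (hnt j)
      rw [sat_charFml]
      have := hemb p ρ
      rwa [hbl] at this

lemma sat_tauPred_of {C : Str2 σ} {S : Str3 σ} [Fintype S.U] (blur : C.U → S.U)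
    (hnode : ∀ (uh : C.U) (u : S.U),
      blur uh = u ↔ C.Sat (fun _ => uh) (boundedNode S u))
    (p : σ.rel)
    (hhalf : ∀ t' : Fin (σ.ar p) → S.U, S.ι p t' = TV.half →
      (∃ t, blur ∘ t = t' ∧ C.ι p t = true) ∧
      (∃ t, blur ∘ t = t' ∧ C.ι p t = false)) :
    SatC C (tauPred S (boundedNode S) p) := by
  unfold SatC
  rw [tauPred, sat_conj]
  intro φ hφ
  obtain ⟨t, hmem, rfl⟩ := List.mem_map.mp hφ
  have htm := List.mem_filter.mp hmem
  have hhalf_t : S.ι p t = TV.half := of_decide_eq_true htm.2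
  obtain ⟨⟨t1, hbl1, hι1⟩, ⟨t0, hbl0, hι0⟩⟩ := hhalf t hhalf_t
  rw [sat_and]
  constructor
  · refine (sat_closeEx C _).mpr ⟨t1, ?_⟩
    rw [sat_and]
    constructor
    · rw [sat_nodeTuple]
      intro j
      exact (hnode (t1 j) (t j)).mp (congrFun hbl1 j)
    · exact hι1
  · refine (sat_closeEx C _).mpr ⟨t0, ?_⟩
    rw [sat_and]
    constructor
    · rw [sat_nodeTuple]
      intro j
      exact (hnode (t0 j) (t j)).mp (congrFun hbl0 j)
    · rw [sat_not]
      intro hc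
      rw [show C.Sat t0 (.atom p fun j => j) ↔ C.ι p (t0 ∘ fun j => j) = true
        from Iff.rfl] at hc
      rw [show (t0 ∘ fun j => j) = t0 from rfl] at hc
      rw [hc] at hι0
      exact Bool.noConfusion hι0

end Main

/-- for every ICA structure `S` and 2-valued structure `C`:
`C ∈ γ_c(S)` iff `C ⊨ γ̂_c(S) = F ∧ τ^S`. -/
theorem mem_gammaC_iff_sat_gammaHatC {σ : Voc} [Fintype σ.rel] (F : Fml σ Empty)
    (S : Str3 σ) [Fintype S.U] (hICA : ICA S) (C : Str2 σ) :
    C ∈ gammaC F S ↔ SatC C (F.and (tau S (boundedNode S))) := by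
  obtain ⟨C0, blur0, hCA0⟩ := id hICA
  constructor
  · rintro ⟨⟨blur, hCA⟩, hF⟩
    unfold SatC
    rw [sat_and]
    refine ⟨hF, ?_⟩
    rw [tau, sat_and]
    constructor
    · exact sat_xi_of blur hCA.1.1 hCA.1.2 (fun uh u => isCanonAbs_node_iff hCA uh u)
    · rw [sat_conj]
      intro φ hφ
      obtain ⟨p, -, rfl⟩ := List.mem_map.mp hφ
      by_cases h2 : 2 ≤ σ.ar p
      · rw [if_pos h2]
        refine sat_tauPred_of blur (fun uh u => isCanonAbs_node_iff hCA uh u) p ?_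
        intro t' ht'
        have hJ := hCA.2.2 p t'
        rw [ht'] at hJ
        have hmem := IsJoin.mem_of_half hJ (by
          rintro a ⟨t, -, rfl⟩
          exact C.tv_ne_half p t)
        obtain ⟨⟨t1, hb1, htv1⟩, ⟨t0, hb0, htv0⟩⟩ := hmem
        exact ⟨⟨t1, hb1, (C.tv_eq_one_iff p t1).mp htv1⟩,
          ⟨t0, hb0, (C.tv_eq_zero_iff p t0).mp htv0⟩⟩
      · rw [if_neg h2]; exact sat_tru C _
  · intro hSat
    unfold SatC at hSat
    rw [sat_and] at hSat
    obtain ⟨hF, hTau⟩ := hSat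
    rw [tau, sat_and] at hTau
    obtain ⟨hXi, hTau2⟩ := hTau
    rw [xi, sat_and, sat_and, sat_and] at hXi
    obtain ⟨hx1, hx2, hx3, hx4⟩ := hXi
    -- every concrete node satisfies some node formula
    have htotal : ∀ w : C.U, ∃ u : S.U, C.Sat (fun _ => w) (boundedNode S u) := by
      intro w
      rw [xiTotal, sat_all] at hx2
      have h := hx2 w
      rw [sat_disj] at h
      obtain ⟨φ, hφ, hsat⟩ := h
      obtain ⟨u, -, rfl⟩ := List.mem_map.mp hφ
      rw [sat_map] at hsat
      exact ⟨u, hsat⟩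
    classical
    let blurC : C.U → S.U := fun w => Classical.choose (htotal w)
    have hblurC : ∀ w : C.U, C.Sat (fun _ => w) (boundedNode S (blurC w)) :=
      fun w => Classical.choose_spec (htotal w)
    have huniq : ∀ (w : C.U) (u : S.U),
        C.Sat (fun _ => w) (boundedNode S u) → blurC w = u :=
      fun w u h => node_unique hICA C w _ _ (hblurC w) h
    -- surjectivity
    have hsurj : Function.Surjective blurC := by
      intro u
      rw [sat_conj] at hx1
      have h := hx1 _ (List.mem_map.mpr
        ⟨u, Finset.mem_toList.mpr (Finset.mem_univ _), rfl⟩)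
      rw [existsNode, sat_ex] at h
      obtain ⟨m, hm⟩ := h
      rw [sat_map] at hm
      exact ⟨m, huniq m u hm⟩
    -- embedding inequality
    have hembp : ∀ (r : σ.rel) (t : Fin (σ.ar r) → C.U),
        TV.le (C.tv r t) (S.ι r (blurC ∘ t)) := by
      intro r t
      by_cases h0 : σ.ar r = 0
      · rw [xiNullary, sat_conj] at hx3
        have h := hx3 _ (List.mem_map.mpr
          ⟨r, Finset.mem_toList.mpr (Finset.mem_univ _), rfl⟩)
        rw [dif_pos h0, sat_charFml] at h
        have e1 : ((fun x : Empty => x.elim) ∘ fun i => Fin.elim0 (Fin.cast h0 i)) = t :=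
          funext fun i => absurd i.isLt (by omega)
        have e2 : (fun i => Fin.elim0 (Fin.cast h0 i)) = blurC ∘ t :=
          funext fun i => absurd i.isLt (by omega)
        rwa [e1, e2] at h
      · rw [xiPredAll, sat_conj] at hx4
        have h := hx4 _ (List.mem_map.mpr
          ⟨r, Finset.mem_toList.mpr (Finset.mem_univ _), rfl⟩)
        rw [if_neg h0, xiPred] at h
        have h2 := (sat_closeAll C _).mp h t
        rw [sat_conj] at h2
        have h3 := h2 _ (List.mem_map.mpr
          ⟨blurC ∘ t, Finset.mem_toList.mpr (Finset.mem_univ _), rfl⟩)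
        rw [sat_imp, sat_nodeTuple] at h3
        have h4 := h3 fun j => hblurC (t j)
        rwa [sat_charFml] at h4
    refine ⟨⟨blurC, ⟨hsurj, hembp⟩, ?_, ?_⟩, hF⟩
    · -- canonical names condition
      intro u v
      constructor
      · intro hbv p hp
        have h1 := hembp p (fun _ => u)
        have h2 := hembp p (fun _ => v)
        have e1 : (blurC ∘ fun _ : Fin (σ.ar p) => u) = fun _ => blurC u := rfl
        have e2 : (blurC ∘ fun _ : Fin (σ.ar p) => v) = fun _ => blurC v := rfl
        rw [e1] at h1
        rw [e2, ← hbv] at h2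
        have hdef := (isCanonAbs_low_definite hCA0 p (by omega) (fun _ => blurC u)).1
        have hv1 := TV.eq_of_le_of_ne_half h1 hdef
        have hv2 := TV.eq_of_le_of_ne_half h2 hdef
        exact C.tv_inj p _ _ (hv1.trans hv2.symm)
      · intro hpv
        have hsatv : C.Sat (fun _ => v) (boundedNode S (blurC u)) := by
          rw [sat_boundedNode]
          intro p hp
          have e : C.tv p (fun _ => v) = C.tv p (fun _ => u) := by
            unfold Str2.tv; rw [hpv p hp]
          rw [e]
          have h1 := hembp p (fun _ => u)
          have e1 : (blurC ∘ fun _ : Fin (σ.ar p) => u) = fun _ => blurC u := rfl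
          rwa [e1] at h1
        exact (huniq v (blurC u) hsatv).symm
    · -- join condition
      intro p t'
      constructor
      · rintro a ⟨t, hbt, rfl⟩
        have := hembp p t
        rwa [hbt] at this
      · intro w hw
        by_cases hh : S.ι p t' = TV.half
        · by_cases har : 2 ≤ σ.ar p
          · rw [sat_conj] at hTau2
            have h := hTau2 _ (List.mem_map.mpr
              ⟨p, Finset.mem_toList.mpr (Finset.mem_univ _), rfl⟩)
            rw [if_pos har, tauPred, sat_conj] at h
            have hmem : t' ∈ ((Finset.univ : Finset (Fin (σ.ar p) → S.U)).toList).filter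
                (fun t => decide (S.ι p t = TV.half)) :=
              List.mem_filter.mpr ⟨Finset.mem_toList.mpr (Finset.mem_univ _),
                decide_eq_true hh⟩
            have h2 := h _ (List.mem_map.mpr ⟨t', hmem, rfl⟩)
            rw [sat_and] at h2
            obtain ⟨hex1, hex0⟩ := h2
            obtain ⟨ρ1, hρ1⟩ := (sat_closeEx C _).mp hex1
            obtain ⟨ρ0, hρ0⟩ := (sat_closeEx C _).mp hex0
            rw [sat_and, sat_nodeTuple] at hρ1 hρ0
            have hb1 : blurC ∘ ρ1 = t' := funext fun j => huniq (ρ1 j) (t' j) (hρ1.1 j)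
            have hb0 : blurC ∘ ρ0 = t' := funext fun j => huniq (ρ0 j) (t' j) (hρ0.1 j)
            have htv1 : C.tv p ρ1 = TV.one := (C.tv_eq_one_iff p ρ1).mpr hρ1.2
            have htv0 : C.tv p ρ0 = TV.zero := by
              refine (C.tv_eq_zero_iff p ρ0).mpr ?_
              have := hρ0.2
              rw [sat_not] at this
              rcases hb : C.ι p (ρ0 ∘ fun j => j) with _ | _
              · exact hb
              · exact absurd hb this
            have hw1 : TV.le TV.one w := htv1 ▸ hw _ ⟨ρ1, hb1, rfl⟩
            have hw0 : TV.le TV.zero w := htv0 ▸ hw _ ⟨ρ0, hb0, rfl⟩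
            have hwhalf : w = TV.half := by
              rcases hw1 with h1 | h1
              · rcases hw0 with h0 | h0
                · exact absurd (h1.trans h0.symm) (by decide)
                · exact h0
              · exact h1
            rw [hh, hwhalf]
            exact TV.le_rfl _
          · have hdef := (isCanonAbs_low_definite hCA0 p (by omega) t').1
            exact absurd hh hdef
        · obtain ⟨t, hbt⟩ := exists_preimage_tuple hsurj t'
          have h1 := hembp p t
          rw [hbt] at h1
          have h2 : C.tv p t = S.ι p t' := TV.eq_of_le_of_ne_half h1 hh
          exact h2 ▸ hw _ ⟨t, hbt, rfl⟩
end HeapAbs
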